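/- arXiv:1105.4367 — 8 statements merged into one kernel-verified Lean document; each statement's English description precedes it below -/
import Mathlib

section
/- Let g, s, d be integers with d = g − s, d > 0, g ≥ 2s + 13, g ≥ 2 and g + s > 2. Then for all integers m, n such that 6m + dn > 0 and 6m² + 2dmn + (2g − 2)n² ≥ −2, one has dm + (2g − 2)n > 0. -/
theorem stmt_1 (g s d : ℤ) (hd : d = g - s) (hdpos : d > 0) (hgs : g ≥ 2 * s + 13)
    (hg : g ≥ 2) (hgsum : g + s > 2) :
    ∀ m n : ℤ, 6 * m + d * n > 0 →
      6 * m ^ 2 + 2 * d * m * n + (2 * g - 2) * n ^ 2 ≥ -2 →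
      d * m + (2 * g - 2) * n > 0 := by
  intro m n hA hQ
  by_contra h
  push_neg at h
  have hg7 : g ≥ 7 := by linarith
  have h2d : 2 * d ≥ g + 13 := by linarith
  have h4d : 4 * d ^ 2 ≥ (g + 13) ^ 2 := by nlinarith
  have hK : d ^ 2 - 12 * g + 12 > 0 := by nlinarith [sq_nonneg (g - 11)]
  -- n ≥ 1
  have hKn : (d ^ 2 - 12 * g + 12) * n ≥ 1 := by
    nlinarith [mul_nonneg hdpos.le (show (0:ℤ) ≤ 6 * m + d * n - 1 by linarith)]
  have hn : n ≥ 1 := by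
    rcases le_or_gt n 0 with hn0 | hn0
    · exfalso
      have := mul_nonpos_of_nonneg_of_nonpos hK.le hn0
      linarith
    · linarith
  -- m ≤ -1
  have hKm : (d ^ 2 - 12 * g + 12) * m ≤ -12 := by
    nlinarith [mul_nonpos_of_nonneg_of_nonpos hdpos.le h,
      mul_nonneg (show (0:ℤ) ≤ 2 * g - 2 by linarith)
        (show (0:ℤ) ≤ 6 * m + d * n - 1 by linarith)]
  have hm : m ≤ -1 := by
    rcases le_or_gt m (-1) with hm0 | hm0
    · exact hm0
    · exfalso
      have hm0' : 0 ≤ m := by linarith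
      have := mul_nonneg hK.le hm0'
      linarith
  -- K m n ≥ -2d
  have h6 : (d ^ 2 - 12 * g + 12) * m * n ≥ -2 * d := by
    nlinarith [mul_nonpos_of_nonneg_of_nonpos (show (0:ℤ) ≤ 6 * m + d * n by linarith) h,
      mul_nonneg hdpos.le
        (show (0:ℤ) ≤ 6 * m ^ 2 + 2 * d * m * n + (2 * g - 2) * n ^ 2 + 2 by linarith)]
  have h6d : d * (-2 * d) ≤ d * ((d ^ 2 - 12 * g + 12) * m * n) :=
    mul_le_mul_of_nonneg_left h6 hdpos.le
  -- (2g-2) K n^2 ≤ 2 d^2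
  have h7 : (2 * g - 2) * ((d ^ 2 - 12 * g + 12) * n ^ 2) ≤ 2 * d ^ 2 := by
    nlinarith [mul_nonneg (show (0:ℤ) ≤ (d ^ 2 - 12 * g + 12) * n by linarith)
      (show (0:ℤ) ≤ -(d * m) - (2 * g - 2) * n by linarith)]
  -- (2g-2) K ≤ 2 d^2
  have h8 : (2 * g - 2) * (d ^ 2 - 12 * g + 12) ≤ 2 * d ^ 2 := by
    nlinarith [mul_nonneg (mul_nonneg (show (0:ℤ) ≤ 2 * g - 2 by linarith) hK.le)
      (show (0:ℤ) ≤ n ^ 2 - 1 by nlinarith)]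
  -- contradiction
  nlinarith [mul_le_mul_of_nonneg_right h4d (show (0:ℤ) ≤ g - 2 by linarith),
    mul_nonneg (show (0:ℤ) ≤ g - 7 by linarith) (sq_nonneg (2 * g - 17))]
end

section
/- Let g, s, d be integers with d = g − s, d > 0, g ≥ 0 and g ≥ 2s + 13. Let m, n be integers with 3m² + dmn + (g − 1)n² = −1, set r = 6m + dn, and assume r ≥ 1. Then one of the following holds: (i) r ≥ d − 5; (ii) s = −3, r = d − 6, m = −1 and n = 1; (iii) s = −3, 3 divides g, r = d − 6, 3m = g and n = −1; (iv) s ≥ −1, g = 4s + 16, r = d − 8, m = s + 4 and n = −1; (v) s ≥ 1, s is odd, 2g = 5(s + 5), r = d − 10, 2m = s + 5 and n = −1. -/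
theorem stmt_2 (g s d : ℤ) (hd : d = g - s) (hdpos : d > 0) (hg0 : g ≥ 0)
    (hgs : g ≥ 2 * s + 13) (m n r : ℤ)
    (hF : 3 * m ^ 2 + d * m * n + (g - 1) * n ^ 2 = -1)
    (hr : r = 6 * m + d * n) (hr1 : r ≥ 1) :
    r ≥ d - 5 ∨
    (s = -3 ∧ r = d - 6 ∧ m = -1 ∧ n = 1) ∨
    (s = -3 ∧ (3 : ℤ) ∣ g ∧ r = d - 6 ∧ 3 * m = g ∧ n = -1) ∨
    (s ≥ -1 ∧ g = 4 * s + 16 ∧ r = d - 8 ∧ m = s + 4 ∧ n = -1) ∨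
    (s ≥ 1 ∧ Odd s ∧ 2 * g = 5 * (s + 5) ∧ r = d - 10 ∧ 2 * m = s + 5 ∧ n = -1) := by
  have key : r ^ 2 = (d ^ 2 - 12 * g + 12) * n ^ 2 - 12 := by
    subst hr; linear_combination 12 * hF
  by_cases hcase : r ≥ d - 5
  · exact Or.inl hcase
  push_neg at hcase
  have hle : r ≤ d - 6 := by omega
  have hd13 : 2 * d ≥ g + 13 := by omega
  have hs13 : s ≤ d - 13 := by omega
  have hns : n = 0 ∨ n = 1 ∨ n = -1 ∨ n ≤ -2 ∨ n ≥ 2 := by omega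
  rcases hns with hn | hn | hn | hn | hn
  · exfalso; subst hn; nlinarith [sq_nonneg r, key]
  · -- n = 1
    subst hn
    have heq : d ^ 2 - r ^ 2 = 12 * d + 12 * s := by linear_combination -key - 12 * hd
    have hkeq : 2 * d * (d - r) - (d - r) * (d - r) = 12 * d + 12 * s := by
      linear_combination heq
    have hub : d - r ≤ 11 := by
      by_contra h
      push_neg at h
      nlinarith [hkeq, mul_nonneg (by omega : (0:ℤ) ≤ d - r - 12)
        (by omega : (0:ℤ) ≤ r - 1), sq_nonneg (d - r - 11)]
    have hv : d - r = 6 ∨ d - r = 7 ∨ d - r = 8 ∨ d - r = 9 ∨ d - r = 10 ∨ d - r = 11 := by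
      omega
    rcases hv with hv | hv | hv | hv | hv | hv <;> rw [hv] at hkeq <;> norm_num at hkeq
    · exact Or.inr (Or.inl ⟨by omega, by omega, by omega, rfl⟩)
    · exfalso; omega
    · exfalso; omega
    · exfalso; omega
    · exfalso; omega
    · exfalso; omega
  · -- n = -1
    subst hn
    have heq : d ^ 2 - r ^ 2 = 12 * d + 12 * s := by linear_combination -key - 12 * hd
    have hkeq : 2 * d * (d - r) - (d - r) * (d - r) = 12 * d + 12 * s := by
      linear_combination heq
    have hub : d - r ≤ 11 := by
      by_contra h
      push_neg at h
      nlinarith [hkeq, mul_nonneg (by omega : (0:ℤ) ≤ d - r - 12)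
        (by omega : (0:ℤ) ≤ r - 1), sq_nonneg (d - r - 11)]
    have hv : d - r = 6 ∨ d - r = 7 ∨ d - r = 8 ∨ d - r = 9 ∨ d - r = 10 ∨ d - r = 11 := by
      omega
    rcases hv with hv | hv | hv | hv | hv | hv <;> rw [hv] at hkeq <;> norm_num at hkeq
    · exact Or.inr (Or.inr (Or.inl ⟨by omega, ⟨m, by omega⟩, by omega, by omega, rfl⟩))
    · exfalso; omega
    · exact Or.inr (Or.inr (Or.inr (Or.inl ⟨by omega, by omega, by omega, by omega, rfl⟩)))
    · exfalso; omega
    · exact Or.inr (Or.inr (Or.inr (Or.inr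
        ⟨by omega, ⟨(s - 1) / 2, by omega⟩, by omega, by omega, by omega, rfl⟩)))
    · exfalso; omega
  · -- n ≤ -2
    exfalso
    have hn4 : n ^ 2 ≥ 4 := by nlinarith
    have hA : d ^ 2 - 12 * g + 12 ≥ 1 := by
      nlinarith [key, hn4, sq_nonneg (r - 1)]
    have hr2 : r ^ 2 ≤ (d - 6) ^ 2 := by
      nlinarith [mul_nonneg (by omega : (0:ℤ) ≤ d - 6 - r) (by omega : (0:ℤ) ≤ d - 6 + r)]
    nlinarith [key, hA, hn4, hr2, sq_nonneg (d - 14), mul_nonneg (by omega : (0:ℤ) ≤ d ^ 2 - 12 * g + 12 - 1) (by omega : (0:ℤ) ≤ n ^ 2 - 4)]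
  · -- n ≥ 2
    exfalso
    have hn4 : n ^ 2 ≥ 4 := by nlinarith
    have hA : d ^ 2 - 12 * g + 12 ≥ 1 := by
      nlinarith [key, hn4, sq_nonneg (r - 1)]
    have hr2 : r ^ 2 ≤ (d - 6) ^ 2 := by
      nlinarith [mul_nonneg (by omega : (0:ℤ) ≤ d - 6 - r) (by omega : (0:ℤ) ≤ d - 6 + r)]
    nlinarith [key, hA, hn4, hr2, sq_nonneg (d - 14), mul_nonneg (by omega : (0:ℤ) ≤ d ^ 2 - 12 * g + 12 - 1) (by omega : (0:ℤ) ≤ n ^ 2 - 4)]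
end

section
/- Let g, s, d be integers with d = g − s, d > 0, g ≥ 0 and g ≥ 2s + 13. If n and r are integers with n² ≥ 4, r ≥ 1, and n²(d² − 12(g − 1)) = r² + 12, then r ≥ d − 5. -/
theorem stmt_3 (g s d : ℤ) (hd : d = g - s) (hdpos : d > 0) (hg0 : g ≥ 0)
    (hgs : g ≥ 2 * s + 13) (n r : ℤ) (hn : n ^ 2 ≥ 4) (hr1 : r ≥ 1)
    (heq : n ^ 2 * (d ^ 2 - 12 * (g - 1)) = r ^ 2 + 12) :
    r ≥ d - 5 := by
  have hX : d ^ 2 - 12 * (g - 1) ≥ 1 := by nlinarith [sq_nonneg n, sq_nonneg r]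
  have h4 : r ^ 2 + 12 ≥ 4 * (d ^ 2 - 12 * (g - 1)) := by
    nlinarith [mul_nonneg (by linarith : (0:ℤ) ≤ n ^ 2 - 4) (by linarith : (0:ℤ) ≤ d ^ 2 - 12 * (g - 1))]
  have hgd : g ≤ 2 * d - 13 := by omega
  by_contra hcon
  push_neg at hcon
  nlinarith [mul_pos (by linarith : (0:ℤ) < d - 5 - r) (by linarith : (0:ℤ) < d - 5 + r), sq_nonneg (3 * d - 43)]
end

section
/- Let g, s, t be integers with s ≥ −1, g ≥ 2s + 13 and t ≥ 0. If (g − s − 6)² − t² = 12s + 24, then either g = 4s + 13 and t = 3s + 5, or 2g = 5s + 22 and 2t = 3s + 2. -/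
theorem stmt_8 (g s t : ℤ) (hs : s ≥ -1) (hg : g ≥ 2 * s + 13) (ht : t ≥ 0)
    (heq : (g - s - 6) ^ 2 - t ^ 2 = 12 * s + 24) :
    (g = 4 * s + 13 ∧ t = 3 * s + 5) ∨ (2 * g = 5 * s + 22 ∧ 2 * t = 3 * s + 2) := by
  set d := g - s - 6 - t with hd
  set e := g - s - 6 + t with he
  have key : d * e = 12 * s + 24 := by rw [hd, he]; linear_combination heq
  have hed : e ≥ d := by omega
  have hesum : d + e ≥ 2 * s + 14 := by omega
  have hd1 : d ≥ 1 := by nlinarith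
  have hd5 : d ≤ 5 := by
    by_contra h
    push_neg at h
    have h6 : d ≥ 6 := by omega
    nlinarith [sq_nonneg (d - 6), mul_le_mul_of_nonneg_left hed (by omega : (0:ℤ) ≤ d)]
  interval_cases d <;> omega
end

section
/- Let g, s, d be integers with d = g − s, d > 0, g ≥ 0, g ≥ 2s + 13 and s ≥ −1. Let m, n be coprime integers with 3m² + dmn + (g − 1)n² = 0 and 6m + dn > 0. Then either g = 4s + 13, s ≥ 0, and ((m, n) = (s + 3, −1) or (m, n) = (−4, 3)); or 2g = 5s + 22, s ≥ 4, s is even, and ((2m = s + 4 and n = −1) or (m, n) = (−5, 3)). -/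
theorem key_aux (g s d t : ℤ) (hd : d = g - s)
    (hgs : g ≥ 2 * s + 13) (hs : s ≥ -1)
    (ht2 : t ^ 2 = d ^ 2 - 12 * g + 12) (htpos : t > 0) :
    (g = 4 * s + 13 ∧ s ≥ 0 ∧ t = d - 8) ∨
    (2 * g = 5 * s + 22 ∧ s ≥ 4 ∧ Even s ∧ t = d - 10) := by
  have hd12 : d ≥ 12 := by omega
  have hub : t < d - 6 := by
    by_contra h
    push_neg at h
    have h1 : (d - 6) * (d - 6) ≤ t * t :=
      mul_le_mul h h (by omega) (by omega)
    nlinarith [ht2]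
  have hlb : d - 12 < t := by
    by_contra h
    push_neg at h
    have h1 : t * t ≤ (d - 12) * (d - 12) :=
      mul_le_mul h h (by omega) (by omega)
    nlinarith [ht2]
  have hcases : t = d - 11 ∨ t = d - 10 ∨ t = d - 9 ∨ t = d - 8 ∨ t = d - 7 := by
    omega
  rcases hcases with h | h | h | h | h <;> subst h
  · exfalso
    have h2 : 12 * g = 22 * d - 109 := by linear_combination ht2
    omega
  · right
    have h2 : 12 * g = 20 * d - 88 := by linear_combination ht2
    exact ⟨by omega, by omega, ⟨g - 11 - 2 * s, by omega⟩, rfl⟩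
  · exfalso
    have h2 : 12 * g = 18 * d - 69 := by linear_combination ht2
    omega
  · left
    have h2 : 12 * g = 16 * d - 52 := by linear_combination ht2
    exact ⟨by omega, by omega, rfl⟩
  · exfalso
    have h2 : 12 * g = 14 * d - 37 := by linear_combination ht2
    omega

theorem stmt_10 (g s d : ℤ) (hd : d = g - s) (hdpos : d > 0) (hg0 : g ≥ 0)
    (hgs : g ≥ 2 * s + 13) (hs : s ≥ -1) (m n : ℤ) (hcop : IsCoprime m n)
    (heq : 3 * m ^ 2 + d * m * n + (g - 1) * n ^ 2 = 0)
    (hH : 6 * m + d * n > 0) :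
    (g = 4 * s + 13 ∧ s ≥ 0 ∧ ((m = s + 3 ∧ n = -1) ∨ (m = -4 ∧ n = 3))) ∨
    (2 * g = 5 * s + 22 ∧ s ≥ 4 ∧ Even s ∧
      ((2 * m = s + 4 ∧ n = -1) ∨ (m = -5 ∧ n = 3))) := by
  have hn0 : n ≠ 0 := by
    rintro rfl
    have h3 : 3 * m ^ 2 = 0 := by linear_combination heq
    have hm2 : m ^ 2 = 0 := by linarith
    have hm : m = 0 := by
      exact pow_eq_zero_iff (two_ne_zero) |>.mp hm2
    subst hm
    exact not_isCoprime_zero_zero hcop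
  have hn3 : n ∣ 3 := by
    have h1 : n ∣ 3 * m ^ 2 :=
      ⟨-(d * m + (g - 1) * n), by linear_combination heq⟩
    exact (hcop.symm.pow_right (n := 2)).dvd_of_dvd_mul_right h1
  have habs : |n| ≤ 3 := Int.le_of_dvd (by norm_num) ((abs_dvd n 3).mpr hn3)
  obtain ⟨hlo, hhi⟩ := abs_le.mp habs
  interval_cases n
  -- n = -3
  · have ht2 : (2 * m - d) ^ 2 = d ^ 2 - 12 * g + 12 := by linarith [heq]
    have htpos : 2 * m - d > 0 := by linarith
    rcases key_aux g s d (2 * m - d) hd hgs hs ht2 htpos with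
      ⟨h1, h2, h3⟩ | ⟨h1, h2, h3, h4⟩
    · exfalso
      have hm3 : (3 : ℤ) ∣ m := by omega
      have hu := hcop.isUnit_of_dvd' hm3 ⟨-1, by norm_num⟩
      rw [Int.isUnit_iff] at hu
      omega
    · exfalso
      have hm3 : (3 : ℤ) ∣ m := by omega
      have hu := hcop.isUnit_of_dvd' hm3 ⟨-1, by norm_num⟩
      rw [Int.isUnit_iff] at hu
      omega
  -- n = -2 : impossible by coprimality/divisibility
  · norm_num at hn3
  -- n = -1
  · have ht2 : (6 * m - d) ^ 2 = d ^ 2 - 12 * g + 12 := by linarith [heq]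
    have htpos : 6 * m - d > 0 := by linarith
    rcases key_aux g s d (6 * m - d) hd hgs hs ht2 htpos with
      ⟨h1, h2, h3⟩ | ⟨h1, h2, h3, h4⟩
    · exact Or.inl ⟨h1, h2, Or.inl ⟨by omega, rfl⟩⟩
    · exact Or.inr ⟨h1, h2, h3, Or.inl ⟨by omega, rfl⟩⟩
  -- n = 0
  · exact absurd rfl hn0
  -- n = 1
  · have ht2 : (6 * m + d) ^ 2 = d ^ 2 - 12 * g + 12 := by linarith [heq]
    have htpos : 6 * m + d > 0 := by linarith
    rcases key_aux g s d (6 * m + d) hd hgs hs ht2 htpos with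
      ⟨h1, h2, h3⟩ | ⟨h1, h2, h3, h4⟩
    · exfalso; omega
    · exfalso; omega
  -- n = 2
  · norm_num at hn3
  -- n = 3
  · have ht2 : (2 * m + d) ^ 2 = d ^ 2 - 12 * g + 12 := by linarith [heq]
    have htpos : 2 * m + d > 0 := by linarith
    rcases key_aux g s d (2 * m + d) hd hgs hs ht2 htpos with
      ⟨h1, h2, h3⟩ | ⟨h1, h2, h3, h4⟩
    · exact Or.inl ⟨h1, h2, Or.inr ⟨by omega, rfl⟩⟩
    · exact Or.inr ⟨h1, h2, h3, Or.inr ⟨by omega, rfl⟩⟩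
end

section
/- Let g, s, d be integers with s ≥ −1, g ≥ 2s + 14 and d = g − s. Suppose m, n are integers satisfying 3m² + dmn + (g − 1)n² > 0, 3 ≤ 6m + nd, 6m + nd ≤ d − 3, and md + (2n − 1)(g − 1) ≤ 0. Then −6m² + (1 − 2n)dm + (n − n²)(2g − 2) − 2 ≥ ⌊(g − 1)/2⌋. -/
theorem stmt_11 (g s d : ℤ) (hs : s ≥ -1) (hg : g ≥ 2 * s + 14) (hd : d = g - s)
    (m n : ℤ)
    (h1 : 3 * m ^ 2 + d * m * n + (g - 1) * n ^ 2 > 0)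
    (h2 : 3 ≤ 6 * m + n * d) (h3 : 6 * m + n * d ≤ d - 3)
    (h4 : m * d + (2 * n - 1) * (g - 1) ≤ 0) :
    -6 * m ^ 2 + (1 - 2 * n) * d * m + (n - n ^ 2) * (2 * g - 2) - 2 ≥ (g - 1) / 2 := by
  subst hd
  have hdlb : g - s ≥ 13 := by linarith
  have hg2d : g ≤ 2 * (g - s) - 14 := by linarith
  have key : 2 * (-6 * m ^ 2 + (1 - 2 * n) * (g - s) * m + (n - n ^ 2) * (2 * g - 2) - 2)
      ≥ g - 2 := by
    by_cases hn0 : n = 0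
    · subst hn0
      have hm1 : 1 ≤ m := by nlinarith
      have hm2 : m ≤ 1 := by
        by_contra hc
        push_neg at hc
        have h2m : (0:ℤ) ≤ m - 2 := by linarith
        have := mul_nonneg h2m (by linarith : (0:ℤ) ≤ g - s)
        nlinarith
      have : m = 1 := le_antisymm hm2 hm1
      subst this
      nlinarith
    · by_cases hn1 : n = 1
      · subst hn1
        have hm1 : m ≤ -1 := by
          have : 6 * m ≤ -3 := by linarith
          omega
        have hm2 : -1 ≤ m := by
          by_contra hc
          push_neg at hc
          have h2m : (0:ℤ) ≤ -m - 2 := by linarith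
          have hdl : (g - s) - (3 - 6 * m) ≥ 0 := by linarith
          have := mul_nonneg hdl h2m
          nlinarith [sq_nonneg (2 * m + 3)]
        have : m = -1 := le_antisymm hm1 hm2
        subst this
        nlinarith
      · -- n ≤ -1 or n ≥ 2, so n^2 - n - 2 ≥ 0
        have hnn : n ^ 2 - n - 2 ≥ 0 := by
          rcases (by omega : n ≤ -1 ∨ 2 ≤ n) with h | h <;> nlinarith
        have hP1 : (6 * m + n * (g - s) - 3) * ((g - s) - 3 - (6 * m + n * (g - s))) ≥ 0 :=
          mul_nonneg (by linarith) (by linarith)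
        have hΔ : (g - s) ^ 2 - 12 * g + 12 - (s ^ 2 + 4 * s + 40) ≥ 0 := by
          nlinarith [mul_nonneg (by linarith : (0:ℤ) ≤ g - 2 * s - 14) (by linarith : (0:ℤ) ≤ g + 2)]
        have hΔpos : (g - s) ^ 2 - 12 * g + 12 ≥ 0 := by nlinarith [sq_nonneg (2 * s + 2)]
        have hP2 : ((g - s) ^ 2 - 12 * g + 12) * (n ^ 2 - n - 2) ≥ 0 :=
          mul_nonneg hΔpos hnn
        have hsq : 4 * s ^ 2 + 10 * s + 130 ≥ 0 := by nlinarith [sq_nonneg (2 * s + 2)]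
        nlinarith [hP1, hP2, hΔ, hsq, hnn]
  generalize -6 * m ^ 2 + (1 - 2 * n) * (g - s) * m + (n - n ^ 2) * (2 * g - 2) - 2 = F at key ⊢
  omega
end

section
/- Let g, s, d be integers with s ≥ −1, g ≥ 2s + 14 and d = g − s. Then, as real numbers, d² − 15g + 3 + d·√(d² − 12(g − 1)) ≥ 0. -/
theorem stmt_14 (g s d : ℤ) (hs : s ≥ -1) (hg : g ≥ 2 * s + 14) (hd : d = g - s) :
    (d : ℝ) ^ 2 - 15 * (g : ℝ) + 3 +
      (d : ℝ) * Real.sqrt ((d : ℝ) ^ 2 - 12 * ((g : ℝ) - 1)) ≥ 0 := by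
  have hgR : (g : ℝ) ≥ 2 * (s : ℝ) + 14 := by exact_mod_cast hg
  have hsR : (s : ℝ) ≥ -1 := by exact_mod_cast hs
  have hdR : (d : ℝ) = (g : ℝ) - (s : ℝ) := by rw [hd]; push_cast; ring
  have hR : (d : ℝ) ^ 2 - 12 * ((g : ℝ) - 1) ≥ 0 := by nlinarith [sq_nonneg ((s:ℝ)+2)]
  have hdpos : (0:ℝ) < (d:ℝ) := by rw [hdR]; nlinarith
  have hsq := Real.sq_sqrt hR
  have hnn := Real.sqrt_nonneg ((d : ℝ) ^ 2 - 12 * ((g : ℝ) - 1))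
  set t : ℝ := Real.sqrt ((d : ℝ) ^ 2 - 12 * ((g : ℝ) - 1)) with ht
  -- key: x^2 * (x^2 - 12*(g-1)) ≥ (15*g - 3 - x^2)^2, i.e. 2*x^2*(3g+1) ≥ 3*(5g-1)^2
  have hkey : (d:ℝ) ^ 2 * ((d:ℝ) ^ 2 - 12 * ((g : ℝ) - 1)) ≥ (15 * (g : ℝ) - 3 - (d:ℝ) ^ 2) ^ 2 := by
    rw [hdR]
    nlinarith [sq_nonneg ((g:ℝ) - 2*(s:ℝ) - 14), sq_nonneg ((s:ℝ)+1), sq_nonneg ((g:ℝ)-12),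
      mul_nonneg (mul_nonneg (by nlinarith : (0:ℝ) ≤ (g:ℝ) - 12) (by nlinarith : (0:ℝ) ≤ (g:ℝ) - 2*(s:ℝ) - 14)) (by nlinarith : (0:ℝ) ≤ (g:ℝ) - 12),
      mul_nonneg (by nlinarith : (0:ℝ) ≤ (s:ℝ) + 1) (by nlinarith : (0:ℝ) ≤ (g:ℝ) - 12)]
  nlinarith [sq_nonneg ((d:ℝ) * t - (15 * (g:ℝ) - 3 - (d:ℝ) ^ 2)), mul_pos hdpos hdpos,
    mul_nonneg hdpos.le hnn, hsq, hkey]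
end

section
/- Let g, s, d, m, n be integers with s ≥ −1, g ≥ 2s + 14, d = g − s, n ≥ 1, 3m² + dmn + (g − 1)n² > 0, 6m + nd ≥ 3, and md + (2n − 1)(g − 1) ≤ 0. Then −6m² + (1 − 2n)dm + (n − n²)(2g − 2) − 2 ≥ ⌊(g − 1)/2⌋. -/
theorem stmt_16 (g s d m n : ℤ) (hs : s ≥ -1) (hg : g ≥ 2 * s + 14) (hd : d = g - s)
    (hn : n ≥ 1)
    (h1 : 3 * m ^ 2 + d * m * n + (g - 1) * n ^ 2 > 0)
    (h2 : 6 * m + n * d ≥ 3)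
    (h3 : m * d + (2 * n - 1) * (g - 1) ≤ 0) :
    -6 * m ^ 2 + (1 - 2 * n) * d * m + (n - n ^ 2) * (2 * g - 2) - 2 ≥ (g - 1) / 2 := by
  have hd13 : d ≥ 13 := by omega
  have h2d : 2 * d ≥ g + 14 := by omega
  have hg12 : g ≥ 12 := by omega
  -- m ≤ -1
  have hm1 : m ≤ -1 := by
    by_contra h
    push_neg at h
    have hm0 : m ≥ 0 := by omega
    nlinarith [mul_nonneg hm0 (by omega : (0:ℤ) ≤ d),
      mul_pos (by omega : (0:ℤ) < 2 * n - 1) (by omega : (0:ℤ) < g - 1)]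
  -- m ≥ 1 - 2n
  have hm2 : m ≥ 1 - 2 * n := by
    by_contra h
    push_neg at h
    have hmn : m ≤ -2 * n := by omega
    have hnd0 : n * (d - 12) ≥ 0 := mul_nonneg (by omega) (by omega)
    have hB : 2 * d * n - 12 * n + 6 * m ≥ 0 := by linarith
    have hP : (-2 * n - m) * (2 * d * n - 12 * n + 6 * m) ≥ 0 :=
      mul_nonneg (by omega) hB
    have e1 : (n ^ 2 - 1) * (2 * d - g - 14) ≥ 0 :=
      mul_nonneg (by nlinarith [mul_nonneg (by omega : (0:ℤ) ≤ n - 1) (by omega : (0:ℤ) ≤ n + 1)])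
        (by omega)
    have hn21 : n ^ 2 ≥ 1 := by nlinarith [mul_nonneg (by omega : (0:ℤ) ≤ n - 1) (by omega : (0:ℤ) ≤ n + 1)]
    have hqb : 12 * n ^ 2 - 2 * d * n ^ 2 + (g - 1) * n ^ 2 ≤ -3 := by nlinarith [e1, hn21]
    -- 2*q(-2n) = 2*q(m) + P
    nlinarith [h1, hP, hqb]
  obtain ⟨F, hF⟩ : ∃ F, F = -6 * m ^ 2 + (1 - 2 * n) * d * m + (n - n ^ 2) * (2 * g - 2) - 2 :=
    ⟨_, rfl⟩
  rw [← hF]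
  rcases eq_or_lt_of_le hn with hn1 | hn2
  · -- n = 1, so m = -1
    obtain rfl : n = 1 := hn1.symm
    have hm : m = -1 := by omega
    subst hm
    have hFd : F = d - 8 := by rw [hF]; ring
    omega
  · -- n ≥ 2
    have hn2' : n ≥ 2 := hn2
    have key : 2 * F ≥ g - 1 := by
      have hA : m ^ 2 * (2 * d - (g + 14)) ≥ 0 := mul_nonneg (sq_nonneg m) (by omega)
      have hB : (2 * n - 1 + m) * (-(m * d) - (2 * n - 1) * (g - 1)) ≥ 0 :=
        mul_nonneg (by omega) (by linarith)
      have hCD : (g - 1) * (2 * n - 1 + m) ^ 2 + 3 * m ^ 2 - 4 ≥ 0 := by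
        rcases le_or_gt m (-2) with h | h
        · have h4 : m ^ 2 ≥ 4 := by nlinarith
          nlinarith [mul_nonneg (by omega : (0:ℤ) ≤ g - 1) (sq_nonneg (2 * n - 1 + m))]
        · have hm : m = -1 := by omega
          subst hm
          nlinarith [mul_nonneg (by omega : (0:ℤ) ≤ g - 12) (sq_nonneg (2 * n - 2)),
            mul_nonneg (by omega : (0:ℤ) ≤ n - 2) (by omega : (0:ℤ) ≤ n - 1)]
      rw [hF]
      linarith [hA, hB, hCD]
    omega
end
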